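/- Let p be an odd prime and F : F_{p^n} → F_{p^n} quadratic with n ≥ 4, such that for every nonzero b ∈ F_{p^n} the linear kernel LK_{Tr(bF)} = {γ : x ↦ Tr(b(F(x+γ)-F(x))) is constant} has dimension at most n-2 over F_p (equivalently |W_F| ≤ p^{n-1}). Then for any α ∈ F_{p^n} and any nonzero β ∈ F_{p^n}, the F_p-valued function x ↦ Tr(αx + βF(x))² has algebraic degree exactly 4. -/

import Mathlib

/-- A function has algebraic degree at most `d` iff all `(d+1)`-fold discrete
derivatives vanish identically. -/
def degLE {V W : Type*} [AddCommGroup V] [AddCommGroup W] : (V → W) → ℕ → Prop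
  | F, 0 => ∀ γ x, F (x + γ) - F x = 0
  | F, (d + 1) => ∀ γ, degLE (fun x => F (x + γ) - F x) d

section basic
variable {V W : Type*} [AddCommGroup V] [AddCommGroup W]

lemma degLE_ext {f g : V → W} (h : ∀ x, f x = g x) {d : ℕ} (hf : degLE f d) :
    degLE g d := funext h ▸ hf

lemma degLE_add : ∀ {d : ℕ} {f g : V → W}, degLE f d → degLE g d →
    degLE (fun x => f x + g x) d
  | 0, f, g, hf, hg => by
    intro γ x
    beta_reduce
    rw [sub_eq_zero, sub_eq_zero.mp (hf γ x), sub_eq_zero.mp (hg γ x)]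
  | (d+1), f, g, hf, hg => fun γ =>
    degLE_ext (fun x => by beta_reduce; abel) (degLE_add (hf γ) (hg γ))

lemma degLE_neg : ∀ {d : ℕ} {f : V → W}, degLE f d → degLE (fun x => - f x) d
  | 0, f, hf => by
    intro γ x
    beta_reduce
    rw [sub_eq_zero, sub_eq_zero.mp (hf γ x)]
  | (d+1), f, hf => fun γ =>
    degLE_ext (fun x => by beta_reduce; abel) (degLE_neg (hf γ))

lemma degLE_sub {d : ℕ} {f g : V → W} (hf : degLE f d) (hg : degLE g d) :
    degLE (fun x => f x - g x) d :=
  degLE_ext (fun x => by abel) (degLE_add hf (degLE_neg hg))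

lemma degLE_succ : ∀ {d : ℕ} {f : V → W}, degLE f d → degLE f (d + 1)
  | 0, f, hf => by
    intro γ δ x
    beta_reduce
    rw [sub_eq_zero, sub_eq_zero.mp (hf γ (x + δ)), sub_eq_zero.mp (hf γ x)]
    abel
  | (d+1), f, hf => fun γ => degLE_succ (hf γ)

lemma degLE_mono {d e : ℕ} (h : d ≤ e) {f : V → W} (hf : degLE f d) : degLE f e := by
  induction e with
  | zero => exact Nat.le_zero.mp h ▸ hf
  | succ e ih =>
    rcases Nat.lt_or_ge d (e+1) with h' | h'
    · exact degLE_succ (ih (Nat.lt_succ_iff.mp h'))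
    · exact (Nat.le_antisymm h h') ▸ hf

lemma degLE_shift : ∀ {d : ℕ} {f : V → W} (γ : V), degLE f d →
    degLE (fun x => f (x + γ)) d
  | 0, f, γ, hf => by
    intro δ x
    beta_reduce
    rw [add_right_comm]
    exact hf δ (x + γ)
  | (d+1), f, γ, hf => fun δ =>
    degLE_ext (fun x => by rw [add_right_comm]) (degLE_shift γ (hf δ))

lemma degLE_comp {U : Type*} [AddCommGroup U] (T : W → U)
    (hT : ∀ u v, T (u - v) = T u - T v) :
    ∀ {d : ℕ} {f : V → W}, degLE f d → degLE (fun x => T (f x)) d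
  | 0, f, hf => by
    intro γ x
    rw [← hT, hf γ x, show (0 : W) = 0 - 0 by abel, hT]
    abel
  | (d+1), f, hf => fun γ =>
    degLE_ext (fun x => (hT _ _)) (degLE_comp T hT (hf γ))

end basic

section ring
variable {V : Type*} [AddCommGroup V] {R : Type*} [CommRing R]

lemma degLE_mul_aux : ∀ (s : ℕ) (a b : ℕ) (f g : V → R), a + b ≤ s →
    degLE f a → degLE g b → degLE (fun x => f x * g x) (a + b)
  | 0, a, b, f, g, hs, hf, hg => by
    obtain ⟨rfl, rfl⟩ : a = 0 ∧ b = 0 := by omega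
    intro γ x
    have h1 := hf γ x; have h2 := hg γ x
    simp only [sub_eq_zero] at *
    rw [h1, h2]
  | (s+1), 0, 0, f, g, hs, hf, hg =>
    degLE_mul_aux s 0 0 f g (by omega) hf hg
  | (s+1), 0, (b+1), f, g, hs, hf, hg => by
    intro γ
    have key : ∀ x, f x * (g (x + γ) - g x) =
        f (x + γ) * g (x + γ) - f x * g x := by
      intro x
      have h1 : f (x + γ) = f x := sub_eq_zero.mp (hf γ x)
      rw [h1]; ring
    exact degLE_ext key
      (degLE_mul_aux s 0 b f (fun x => g (x + γ) - g x) (by omega) hf (hg γ))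
  | (s+1), (a+1), 0, f, g, hs, hf, hg => by
    have := degLE_mul_aux (s+1) 0 (a+1) g f (by omega) hg hf
    rw [Nat.zero_add] at this
    exact degLE_ext (fun x => mul_comm _ _) (by simpa using this)
  | (s+1), (a+1), (b+1), f, g, hs, hf, hg => by
    intro γ
    have key : ∀ x, (f (x + γ) - f x) * g (x + γ) + f x * (g (x + γ) - g x) =
        f (x + γ) * g (x + γ) - f x * g x := fun x => by ring
    have t1 : degLE (fun x => (f (x + γ) - f x) * g (x + γ)) (a + (b+1)) :=
      degLE_mul_aux s a (b+1) _ _ (by omega) (hf γ) (degLE_shift γ hg)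
    have t2 : degLE (fun x => f x * (g (x + γ) - g x)) ((a+1) + b) :=
      degLE_mul_aux s (a+1) b _ _ (by omega) hf (hg γ)
    have : degLE (fun x => (f (x + γ) - f x) * g (x + γ) + f x * (g (x + γ) - g x))
        (a + b + 1) := degLE_add (by simpa [Nat.add_comm, Nat.add_assoc, Nat.add_left_comm] using t1)
        (by simpa [Nat.add_comm, Nat.add_assoc, Nat.add_left_comm] using t2)
    exact degLE_ext key (by simpa [Nat.add_comm, Nat.add_assoc, Nat.add_left_comm] using this)

lemma degLE_mul {a b : ℕ} {f g : V → R} (hf : degLE f a) (hg : degLE g b) :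
    degLE (fun x => f x * g x) (a + b) :=
  degLE_mul_aux (a+b) a b f g le_rfl hf hg

end ring

section main
variable {p : ℕ} [Fact p.Prime] {V : Type*} [AddCommGroup V] [Module (ZMod p) V]

/-- If `h` is quadratic with `B(a,b)=0` and `h²` has degree ≤ 3 then `2·B(a,a)·B(b,b) = 0`. -/
lemma four_diff (h : V → ZMod p) (hhdeg : degLE h 2)
    (hsq3 : degLE (fun x => h x ^ 2) 3) (a b : V)
    (hab : h (b + a) - h b - h a + h 0 = 0) :
    2 * ((h (a + a) - 2 * h a + h 0) * (h (b + b) - 2 * h b + h 0)) = 0 := by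
  have P : ∀ u v w : V, h (u + v + w) - h (u + v) - h (u + w) - h (v + w)
      + h u + h v + h w - h 0 = 0 := by
    intro u v w
    have := hhdeg w v u 0
    simp only [zero_add] at this
    linear_combination this
  have v1 : h (b + a) = h b + h a - h 0 := by linear_combination hab
  have v2 : h (b + a + a) = h b + h (a + a) - h 0 := by
    linear_combination P b a a + 2 * v1
  have v3 : h (b + b + a) = h (b + b) + h a - h 0 := by
    linear_combination P b b a + 2 * v1
  have v4 : h (b + b + a + a) = h (b + b) + h (a + a) - h 0 := by
    linear_combination P (b + b) a a + 2 * v3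
  have E := hsq3 a a b b 0
  simp only [zero_add] at E
  rw [v4, v3, v2, v1] at E
  linear_combination E


/-- Counting: if `h` is quadratic and `h²` has degree ≤ 3, then the "linear kernel"
`K` of `h` satisfies `card V ≤ card K * p`. -/
lemma main_aux [Finite V] (hp2 : (2 : ZMod p) ≠ 0)
    (h : V → ZMod p) (hhdeg : degLE h 2)
    (hsq3 : degLE (fun x => h x ^ 2) 3) :
    Nat.card V ≤ Nat.card {γ : V | ∃ c : ZMod p, ∀ x, h (x + γ) - h x = c} * p := by
  classical
  set K : Set V := {γ : V | ∃ c : ZMod p, ∀ x, h (x + γ) - h x = c} with hK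
  set B : V → V → ZMod p := fun γ δ => h (γ + δ) - h γ - h δ + h 0 with hBdef
  have P : ∀ u v w : V, h (u + v + w) - h (u + v) - h (u + w) - h (v + w)
      + h u + h v + h w - h 0 = 0 := by
    intro u v w
    have := hhdeg w v u 0
    simp only [zero_add] at this
    linear_combination this
  have Bsymm : ∀ γ δ, B γ δ = B δ γ := by
    intro γ δ; simp only [hBdef]; rw [add_comm γ δ]; ring
  have Badd : ∀ u v w, B (u + v) w = B u w + B v w := by
    intro u v w; simp only [hBdef]; linear_combination P u v w
  have Badd' : ∀ u v w, B u (v + w) = B u v + B u w := by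
    intro u v w; rw [Bsymm, Badd, Bsymm u v, Bsymm u w]
  have Bzero : ∀ u, B u 0 = 0 := by
    intro u; simp only [hBdef]; rw [add_zero]; ring
  have Bnsmul : ∀ (m : ℕ) u v, B u (m • v) = m • B u v := by
    intro m u v
    induction m with
    | zero => simpa using Bzero u
    | succ k ih => rw [succ_nsmul, succ_nsmul, Badd', ih]
  have Bsmul : ∀ (s : ZMod p) u v, B u (s • v) = s * B u v := by
    intro s u v
    have h1 : s • v = (s.val : ℕ) • v := by
      rw [← Nat.cast_smul_eq_nsmul (ZMod p), ZMod.natCast_val, ZMod.cast_id]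
    rw [h1, Bnsmul, nsmul_eq_mul, ZMod.natCast_val, ZMod.cast_id]
  -- membership in K
  have hKmem : ∀ γ, γ ∈ K ↔ ∀ x, B γ x = 0 := by
    intro γ
    constructor
    · rintro ⟨c, hc⟩ x
      have h1 := hc x
      have h2 := hc 0
      simp only [zero_add] at h2
      simp only [hBdef]
      rw [add_comm γ x]
      linear_combination h1 - h2
    · intro hx
      refine ⟨h γ - h 0, fun x => ?_⟩
      have := hx x
      simp only [hBdef] at this
      rw [add_comm γ x] at this
      linear_combination this
  -- Case 1: K is everything
  by_cases hKuniv : K = Set.univ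
  · have : Nat.card K = Nat.card V := by rw [hKuniv]; simp [Nat.card_univ]
    rw [this]
    have : 1 ≤ p := (Fact.out : p.Prime).one_lt.le.trans' (by norm_num)
    calc Nat.card V = Nat.card V * 1 := (mul_one _).symm
      _ ≤ Nat.card V * p := Nat.mul_le_mul_left _ this
  -- Case 2: there is γ₀ ∉ K, i.e. B is nonzero
  obtain ⟨γ₀, hγ₀⟩ : ∃ γ₀, γ₀ ∉ K := by
    by_contra hcon
    push_neg at hcon
    exact hKuniv (Set.eq_univ_iff_forall.mpr hcon)
  obtain ⟨δ₀, hδ₀⟩ : ∃ δ₀, B γ₀ δ₀ ≠ 0 := by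
    by_contra hcon
    push_neg at hcon
    exact hγ₀ ((hKmem γ₀).mpr hcon)
  -- get an anisotropic vector a
  obtain ⟨a, ha⟩ : ∃ a, B a a ≠ 0 := by
    by_cases h1 : B γ₀ γ₀ ≠ 0
    · exact ⟨γ₀, h1⟩
    by_cases h2 : B δ₀ δ₀ ≠ 0
    · exact ⟨δ₀, h2⟩
    push_neg at h1 h2
    refine ⟨γ₀ + δ₀, ?_⟩
    have : B (γ₀ + δ₀) (γ₀ + δ₀) = 2 * B γ₀ δ₀ := by
      rw [Badd, Badd', Badd', h1, h2, Bsymm δ₀ γ₀]; ring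
    rw [this]
    exact mul_ne_zero hp2 hδ₀
  -- the orthogonal complement of a
  set φ : V →+ ZMod p := AddMonoidHom.mk' (fun x => B a x)
    (fun u v => Badd' a u v) with hφ
  have hφsurj : Function.Surjective φ := by
    intro c
    refine ⟨(c / B a a) • a, ?_⟩
    show B a ((c / B a a) • a) = c
    rw [Bsmul, div_mul_cancel₀ _ ha]
  -- every element of ker φ is isotropic (else contradiction via four_diff)
  have hWiso : ∀ w, φ w = 0 → B w w = 0 := by
    intro w hw
    by_contra hww
    have hab : h (w + a) - h w - h a + h 0 = 0 := by
      have : B a w = 0 := hw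
      simp only [hBdef] at this
      rw [add_comm a w] at this
      linear_combination this
    have := four_diff h hhdeg hsq3 a w hab
    have e1 : h (a + a) - 2 * h a + h 0 = B a a := by simp only [hBdef]; ring
    have e2 : h (w + w) - 2 * h w + h 0 = B w w := by simp only [hBdef]; ring
    rw [e1, e2] at this
    rcases mul_eq_zero.mp this with h' | h'
    · exact hp2 h'
    · rcases mul_eq_zero.mp h' with h'' | h''
      · exact ha h''
      · exact hww h''
  -- hence ker φ ⊆ K
  have hsub : (φ.ker : Set V) ⊆ K := by
    intro w hw
    have hw0 : φ w = 0 := hw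
    rw [hKmem]
    intro x
    -- pairwise isotropy on the kernel
    have pair : ∀ u v, φ u = 0 → φ v = 0 → B u v = 0 := by
      intro u v hu hv
      have huv : φ (u + v) = 0 := by rw [map_add, hu, hv, add_zero]
      have := hWiso (u + v) huv
      rw [Badd, Badd', Badd'] at this
      rw [hWiso u hu, hWiso v hv] at this
      have h2 : 2 * B u v = 0 := by rw [Bsymm v u] at this; linear_combination this
      rcases mul_eq_zero.mp h2 with h' | h'
      · exact absurd h' hp2
      · exact h'
    -- decompose x = (c/λ)•a + x'
    set c : ZMod p := B a x with hc
    have hx' : φ (x - (c / B a a) • a) = 0 := by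
      show B a (x - (c / B a a) • a) = 0
      rw [sub_eq_add_neg, Badd', ← smul_neg, Bsmul, ← hc]
      have : B a (-a) = - B a a := by
        have := Badd' a a (-a)
        rw [add_neg_cancel, Bzero] at this
        linear_combination -this
      rw [this]
      field_simp
      ring
    have hdecomp : x = (c / B a a) • a + (x - (c / B a a) • a) := by abel
    rw [hdecomp, Badd', Bsmul]
    rw [pair w _ hw0 hx', Bsymm w a]
    have hba : B a w = 0 := hw0
    rw [hba]
    ring
  -- cardinality of the kernel
  have hcard : Nat.card V = Nat.card φ.ker * p := by
    have h1 := AddSubgroup.card_eq_card_quotient_mul_card_addSubgroup φ.ker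
    have h2 : Nat.card (V ⧸ φ.ker) = p := by
      rw [Nat.card_congr (QuotientAddGroup.quotientKerEquivOfSurjective φ hφsurj).toEquiv]
      exact Nat.card_zmod p
    rw [h1, h2, mul_comm]
  rw [hcard]
  have hm : Nat.card φ.ker ≤ Nat.card K := by
    have := Nat.card_mono (Set.toFinite K) hsub
    simpa using this
  exact Nat.mul_le_mul_right p hm

end main

/-- For odd `p` and quadratic `F` with every nonzero component function having linear
kernel of dimension at most `n-2` (equivalently `|W_F| ≤ p^{n-1}`), the function
`x ↦ Tr(αx + βF(x))²` has algebraic degree exactly `4`. -/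
theorem square_has_degree_four
    (p n : ℕ) [Fact p.Prime] (hp : p ≠ 2) (hn : 4 ≤ n)
    (F : GaloisField p n → GaloisField p n)
    (hquad : degLE F 2 ∧ ¬ degLE F 1)
    (hLK : ∀ b : GaloisField p n, b ≠ 0 →
      Nat.card {γ : GaloisField p n | ∃ c : ZMod p, ∀ x,
        Algebra.trace (ZMod p) (GaloisField p n) (b * (F (x + γ) - F x)) = c}
        ≤ p ^ (n - 2)) :
    ∀ (α : GaloisField p n) (β : GaloisField p n), β ≠ 0 →
      degLE (fun x => (Algebra.trace (ZMod p) (GaloisField p n) (α * x + β * F x)) ^ 2) 4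
      ∧ ¬ degLE (fun x => (Algebra.trace (ZMod p) (GaloisField p n) (α * x + β * F x)) ^ 2) 3 := by
  intro α β hβ
  have hppos : 0 < p := (Fact.out : p.Prime).pos
  have hp2 : (2 : ZMod p) ≠ 0 := by
    intro h2
    have : (p : ℕ) ∣ 2 := by
      have := (ZMod.natCast_eq_zero_iff 2 p).mp (by exact_mod_cast h2)
      exact this
    exact hp ((Nat.prime_dvd_prime_iff_eq (Fact.out : p.Prime) Nat.prime_two).mp this)
  have hLdeg : degLE (fun x : GaloisField p n =>
      Algebra.trace (ZMod p) (GaloisField p n) (α * x)) 1 := by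
    intro γ δ x
    beta_reduce
    simp only [mul_add, map_add]
    ring
  have hhdeg : degLE (fun x : GaloisField p n =>
      Algebra.trace (ZMod p) (GaloisField p n) (β * F x)) 2 :=
    degLE_comp (fun y => Algebra.trace (ZMod p) (GaloisField p n) (β * y))
      (fun u v => by beta_reduce; rw [mul_sub, map_sub]) hquad.1
  have hqdeg : degLE (fun x : GaloisField p n =>
      Algebra.trace (ZMod p) (GaloisField p n) (α * x + β * F x)) 2 :=
    degLE_ext (fun x => (map_add (Algebra.trace (ZMod p) (GaloisField p n)) _ _).symm)
      (degLE_add (degLE_mono (by norm_num) hLdeg) hhdeg)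
  constructor
  · exact degLE_ext
      (fun x => (sq (Algebra.trace (ZMod p) (GaloisField p n) (α * x + β * F x))).symm)
      (degLE_mul (a := 2) (b := 2) hqdeg hqdeg)
  · intro hdeg
    -- h² has degree ≤ 3
    have hsq3 : degLE (fun x : GaloisField p n =>
        (Algebra.trace (ZMod p) (GaloisField p n) (β * F x)) ^ 2) 3 := by
      have t2 : degLE (fun x : GaloisField p n =>
          (Algebra.trace (ZMod p) (GaloisField p n) (α * x)) ^ 2) 3 :=
        degLE_mono (by norm_num)
          (degLE_ext (fun x => (sq _).symm) (degLE_mul (a := 1) (b := 1) hLdeg hLdeg))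
      have t3 : degLE (fun x : GaloisField p n => (2 : ZMod p) *
          (Algebra.trace (ZMod p) (GaloisField p n) (α * x) *
           Algebra.trace (ZMod p) (GaloisField p n) (β * F x))) 3 := by
        have c0 : degLE (fun _ : GaloisField p n => (2 : ZMod p)) 0 := fun γ x => by simp
        have := degLE_mul (a := 0) (b := 3) c0
          (degLE_mul (a := 1) (b := 2) hLdeg hhdeg)
        simpa using this
      have := degLE_sub (degLE_sub hdeg t2) t3
      refine degLE_ext (fun x => ?_) this
      rw [map_add (Algebra.trace (ZMod p) (GaloisField p n))]
      ring
    -- apply the counting lemma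
    have hmain := main_aux (V := GaloisField p n) hp2 _ hhdeg hsq3
    -- identify the two kernel sets
    have hsets : {γ : GaloisField p n | ∃ c : ZMod p, ∀ x,
        Algebra.trace (ZMod p) (GaloisField p n) (β * F (x + γ)) -
        Algebra.trace (ZMod p) (GaloisField p n) (β * F x) = c} =
        {γ : GaloisField p n | ∃ c : ZMod p, ∀ x,
        Algebra.trace (ZMod p) (GaloisField p n) (β * (F (x + γ) - F x)) = c} := by
      ext γ
      simp only [Set.mem_setOf_eq, mul_sub, map_sub]
    rw [hsets] at hmain
    have hcardV : Nat.card (GaloisField p n) = p ^ n := GaloisField.card p n (by omega)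
    have hfinal : p ^ n ≤ p ^ (n - 2) * p :=
      hcardV ▸ hmain.trans (Nat.mul_le_mul_right p (hLK β hβ))
    have : p ^ (n - 2) * p = p ^ (n - 1) := by
      rw [← pow_succ]
      congr 1
      omega
    rw [this] at hfinal
    have : p ^ (n - 1) < p ^ n :=
      Nat.pow_lt_pow_right (Fact.out : p.Prime).one_lt (by omega)
    omega
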